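/- Let f be a G-surface with positive metric coefficients H₁, H₂, nonvanishing principal curvatures κ₁, κ₂, associated surface given by functions h, l satisfying the G-condition (h-l)² = (H₂² + εH₁²)/(H₁²H₂²), with κ̂₁ = κ₁/h, κ̂₂ = κ₂/l, and dual curvatures κ₁* = H₁²κ₁/(1 - h²H₁²), κ₂* = H₂²κ₂/(ε - l²H₂²). Then (1/κ₁ - 1/κ₂)(1/κ₁* - 1/κ₂*) = 1/(κ₁²H₁²) + ε/(κ₂²H₂²) - (1/κ̂₁ - 1/κ̂₂)². -/

import Mathlib

/-- identity relating the dual surface of a G-surface to Demoulin's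
equation. Stated pointwise. -/
theorem stmt_6 (H₁ H₂ κ₁ κ₂ h l ε : ℝ)
    (hH₁ : 0 < H₁) (hH₂ : 0 < H₂)
    (hκ₁ : κ₁ ≠ 0) (hκ₂ : κ₂ ≠ 0) (hh : h ≠ 0) (hl : l ≠ 0)
    (hd1 : 1 - h ^ 2 * H₁ ^ 2 ≠ 0) (hd2 : ε - l ^ 2 * H₂ ^ 2 ≠ 0)
    (hG : (h - l) ^ 2 = (H₂ ^ 2 + ε * H₁ ^ 2) / (H₁ ^ 2 * H₂ ^ 2))
    (k1hat k2hat k1s k2s : ℝ)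
    (h1 : k1hat = κ₁ / h) (h2 : k2hat = κ₂ / l)
    (h3 : k1s = H₁ ^ 2 * κ₁ / (1 - h ^ 2 * H₁ ^ 2))
    (h4 : k2s = H₂ ^ 2 * κ₂ / (ε - l ^ 2 * H₂ ^ 2))
    (hk1s : k1s ≠ 0) (hk2s : k2s ≠ 0) :
    (1 / κ₁ - 1 / κ₂) * (1 / k1s - 1 / k2s)
      = 1 / (κ₁ ^ 2 * H₁ ^ 2) + ε / (κ₂ ^ 2 * H₂ ^ 2)
        - (1 / k1hat - 1 / k2hat) ^ 2 := by
  have hH₁' : H₁ ≠ 0 := hH₁.ne'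
  have hH₂' : H₂ ≠ 0 := hH₂.ne'
  subst h1 h2 h3 h4
  have hG' : (h - l) ^ 2 * (H₁ ^ 2 * H₂ ^ 2) = H₂ ^ 2 + ε * H₁ ^ 2 := by
    field_simp at hG; linarith [hG]
  field_simp
  linear_combination (κ₁*κ₂) * hG'
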